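/- arXiv:0705.4081 — 2 statements merged into one kernel-verified Lean document; each statement's English description precedes it below -/
import Mathlib

section
/- The subsets V_1 and V_2 of the unit sphere S^5 in C^3 are disjoint, where V_1 = { A^k z : 0 ≤ k ≤ 2, z ∈ S^5, |z_2|² + |z_3|² ≤ ε } with A the cyclic permutation matrix of coordinates, V_2 = P·V_1, 0 < ε < 1/9, and P = (1/√3)·[[1, ω, 1],[1, 1, ω],[ω, 1, 1]] with ω = e^{2πi/3}. -/
open Complex Matrix

noncomputable def ω : ℂ := Complex.exp (2 * Real.pi * Complex.I / 3)

def A : Matrix (Fin 3) (Fin 3) ℂ := !![0, 1, 0; 0, 0, 1; 1, 0, 0]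

noncomputable def P : Matrix (Fin 3) (Fin 3) ℂ :=
  ((Real.sqrt 3 : ℂ)⁻¹) • !![1, ω, 1; 1, 1, ω; ω, 1, 1]

/-- The subset `V₁` of the unit sphere `S⁵ ⊆ ℂ³`. -/
noncomputable def V₁ (ε : ℝ) : Set (Fin 3 → ℂ) :=
  { w | ∃ k : ℕ, k ≤ 2 ∧ ∃ z : Fin 3 → ℂ, (∑ i, ‖z i‖ ^ 2) = 1 ∧
      ‖z 1‖ ^ 2 + ‖z 2‖ ^ 2 ≤ ε ∧ w = (A ^ k).mulVec z }

/-- The subset `V₂ = P · V₁`. -/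
noncomputable def V₂ (ε : ℝ) : Set (Fin 3 → ℂ) := (fun z => P.mulVec z) '' V₁ ε

lemma norm_omega : ‖ω‖ = 1 := by
  simp [ω, Complex.norm_exp]

lemma abs_omega : ‖ω‖ = 1 := by
  exact norm_omega

lemma Asq : A ^ 2 = !![0, 0, 1; 1, 0, 0; 0, 1, 0] := by
  ext i j
  fin_cases i <;> fin_cases j <;>
    simp [A, pow_two, Matrix.mul_apply, Fin.sum_univ_three, Matrix.vecHead, Matrix.vecTail]

lemma V1_big {ε : ℝ} {w : Fin 3 → ℂ} (h : w ∈ V₁ ε) : ∃ i : Fin 3, 1 - ε ≤ ‖w i‖ ^ 2 := by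
  obtain ⟨k, hk, z, hz1, hz2, rfl⟩ := h
  rw [Fin.sum_univ_three] at hz1
  interval_cases k
  · refine ⟨0, ?_⟩
    simp only [pow_zero, Matrix.one_mulVec]
    linarith
  · refine ⟨2, ?_⟩
    simp only [pow_one]
    have : A.mulVec z 2 = z 0 := by
      simp [A, Matrix.mulVec, dotProduct, Fin.sum_univ_three, Matrix.vecHead, Matrix.vecTail]
    rw [this]; linarith
  · refine ⟨1, ?_⟩
    rw [Asq]
    have : (!![0, 0, 1; 1, 0, 0; 0, 1, 0] : Matrix (Fin 3) (Fin 3) ℂ).mulVec z 1 = z 0 := by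
      simp [Matrix.mulVec, dotProduct, Fin.sum_univ_three, Matrix.vecHead, Matrix.vecTail]
    rw [this]; linarith

lemma V1_abs_sum {ε : ℝ} (hε : 0 ≤ ε) {w : Fin 3 → ℂ} (h : w ∈ V₁ ε) :
    ‖w 0‖ + ‖w 1‖ + ‖w 2‖ ≤ 1 + Real.sqrt (2 * ε) := by
  obtain ⟨k, hk, z, hz1, hz2, rfl⟩ := h
  rw [Fin.sum_univ_three] at hz1
  have h0 : ‖z 0‖ ≤ 1 := by
    nlinarith [norm_nonneg (z 0), sq_nonneg (‖z 0‖ - 1), norm_nonneg (z 1), norm_nonneg (z 2),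
      sq_nonneg (‖z 1‖), sq_nonneg (‖z 2‖)]
  have h12 : ‖z 1‖ + ‖z 2‖ ≤ Real.sqrt (2 * ε) := by
    have hsq : (‖z 1‖ + ‖z 2‖) ^ 2 ≤ 2 * ε := by nlinarith [sq_nonneg (‖z 1‖ - ‖z 2‖)]
    calc ‖z 1‖ + ‖z 2‖ = Real.sqrt ((‖z 1‖ + ‖z 2‖) ^ 2) :=
          (Real.sqrt_sq (by positivity)).symm
      _ ≤ Real.sqrt (2 * ε) := Real.sqrt_le_sqrt hsq
  have key : ∀ v : Fin 3 → ℂ, ‖(A ^ k).mulVec v 0‖ + ‖(A ^ k).mulVec v 1‖ + ‖(A ^ k).mulVec v 2‖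
      = ‖v 0‖ + ‖v 1‖ + ‖v 2‖ := by
    intro v
    interval_cases k
    · simp [Matrix.one_mulVec]
    · simp only [pow_one]
      simp [A, Matrix.mulVec, dotProduct, Fin.sum_univ_three, Matrix.vecHead, Matrix.vecTail]
      ring
    · rw [Asq]
      simp [Matrix.mulVec, dotProduct, Fin.sum_univ_three, Matrix.vecHead, Matrix.vecTail]
      ring
  rw [key]
  linarith

lemma V2_bound {ε : ℝ} (hε : 0 ≤ ε) {w : Fin 3 → ℂ} (h : w ∈ V₂ ε) (i : Fin 3) :
    ‖w i‖ ≤ (1 + Real.sqrt (2 * ε)) / Real.sqrt 3 := by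
  obtain ⟨v, hv, rfl⟩ := h
  have hsum := V1_abs_sum hε hv
  have hc : ‖((Real.sqrt 3 : ℂ)⁻¹)‖ = (Real.sqrt 3)⁻¹ := by
    rw [norm_inv]
    norm_cast
    simp [Real.sqrt_nonneg]
  have h3 : (0:ℝ) < Real.sqrt 3 := Real.sqrt_pos.mpr (by norm_num)
  have hP : P.mulVec v i = ((Real.sqrt 3 : ℂ)⁻¹) • ((!![1, ω, 1; 1, 1, ω; ω, 1, 1] : Matrix (Fin 3) (Fin 3) ℂ).mulVec v) i := by
    rw [P, Matrix.smul_mulVec]; rfl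
  show ‖P.mulVec v i‖ ≤ _
  rw [hP]
  have key : ∀ a b c : ℂ, ‖a‖ = 1 → ‖b‖ = 1 → ‖c‖ = 1 →
      ‖a * v 0 + b * v 1 + c * v 2‖ ≤ ‖v 0‖ + ‖v 1‖ + ‖v 2‖ := by
    intro a b c ha hb hc
    calc ‖a * v 0 + b * v 1 + c * v 2‖ ≤ ‖a * v 0‖ + ‖b * v 1‖ + ‖c * v 2‖ := norm_add₃_le
      _ = ‖v 0‖ + ‖v 1‖ + ‖v 2‖ := by
          rw [norm_mul, norm_mul, norm_mul, ha, hb, hc]; ring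
  have hbound : ‖(!![1, ω, 1; 1, 1, ω; ω, 1, 1] : Matrix (Fin 3) (Fin 3) ℂ).mulVec v i‖
      ≤ ‖v 0‖ + ‖v 1‖ + ‖v 2‖ := by
    fin_cases i <;>
      simp only [Matrix.mulVec, dotProduct, Fin.sum_univ_three, Matrix.cons_val',
        Matrix.cons_val_zero, Matrix.cons_val_one, Matrix.head_cons, Matrix.empty_val',
        Matrix.cons_val_fin_one, Matrix.head_fin_const, Matrix.cons_val_two, Matrix.tail_cons,
        Fin.isValue] <;>
      exact key _ _ _ (by simp [abs_omega, Matrix.vecHead, Matrix.vecTail]) (by simp [abs_omega, Matrix.vecHead, Matrix.vecTail]) (by simp [abs_omega, Matrix.vecHead, Matrix.vecTail])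
  calc ‖((Real.sqrt 3 : ℂ)⁻¹) • ((!![1, ω, 1; 1, 1, ω; ω, 1, 1] : Matrix (Fin 3) (Fin 3) ℂ).mulVec v) i‖
      = (Real.sqrt 3)⁻¹ * ‖(!![1, ω, 1; 1, 1, ω; ω, 1, 1] : Matrix (Fin 3) (Fin 3) ℂ).mulVec v i‖ := by
        rw [norm_smul, hc]
    _ ≤ (Real.sqrt 3)⁻¹ * (1 + Real.sqrt (2 * ε)) := by
        apply mul_le_mul_of_nonneg_left _ (by positivity)
        exact le_trans hbound hsum
    _ = (1 + Real.sqrt (2 * ε)) / Real.sqrt 3 := by ring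

theorem V₁_disjoint_V₂ (ε : ℝ) (hε : 0 < ε) (hε' : ε < 1 / 9) :
    Disjoint (V₁ ε) (V₂ ε) := by
  rw [Set.disjoint_left]
  intro w h1 h2
  obtain ⟨i, hi⟩ := V1_big h1
  have h2i := V2_bound hε.le h2 i
  set s := Real.sqrt (2 * ε) with hs
  have hs2 : s ^ 2 = 2 * ε := Real.sq_sqrt (by positivity)
  have hs0 : 0 ≤ s := Real.sqrt_nonneg _
  have ht : (0:ℝ) < Real.sqrt 3 := Real.sqrt_pos.mpr (by norm_num)
  have ht2 : (Real.sqrt 3) ^ 2 = 3 := Real.sq_sqrt (by norm_num)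
  have hsq : ‖w i‖ ^ 2 ≤ ((1 + s) / Real.sqrt 3) ^ 2 :=
    pow_le_pow_left₀ (norm_nonneg _) h2i 2
  have hdiv : ((1 + s) / Real.sqrt 3) ^ 2 = (1 + s) ^ 2 / 3 := by
    rw [div_pow, ht2]
  rw [hdiv] at hsq
  nlinarith [sq_nonneg (2 - 5 * ε), sq_nonneg s, mul_pos hε hε]
end

section
/- Let G be a finite group of odd order n, and let N = Σ_{g∈G} g ∈ ZG. Then the ZG-submodule ⟨2, N⟩ of ZG generated by 2 and N is a projective ZG-module. -/
open MonoidAlgebra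

namespace SpanTwoNormAux

variable (G : Type*) [Group G] [Fintype G]

/-- The norm element. -/
noncomputable def NN : MonoidAlgebra ℤ G := ∑ g : G, of ℤ G g

/-- The augmentation map. -/
noncomputable def eps : MonoidAlgebra ℤ G →ₐ[ℤ] ℤ := MonoidAlgebra.lift ℤ ℤ G 1

variable {G}

lemma eps_of (g : G) : eps G (of ℤ G g) = 1 := by
  simp [eps]

lemma eps_single (a : G) (b : ℤ) : eps G (MonoidAlgebra.single a b) = b := by
  simp [eps, MonoidAlgebra.lift_single]

lemma eps_NN : eps G (NN G) = (Fintype.card G : ℤ) := by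
  simp [NN, eps]

lemma of_mul_NN (g : G) : of ℤ G g * NN G = NN G := by
  rw [NN, Finset.mul_sum]
  exact Fintype.sum_bijective (fun h => g * h) (Group.mulLeft_bijective g) _ _
    (fun h => by rw [← map_mul])

lemma NN_mul_of (g : G) : NN G * of ℤ G g = NN G := by
  rw [NN, Finset.sum_mul]
  exact Fintype.sum_bijective (fun h => h * g) (Group.mulRight_bijective g) _ _
    (fun h => by rw [← map_mul])

lemma single_eq_smul_of (a : G) (b : ℤ) :
    (MonoidAlgebra.single a b : MonoidAlgebra ℤ G) = b • of ℤ G a := by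
  simp [MonoidAlgebra.of_apply, Finsupp.smul_single]

lemma comm_two (r : MonoidAlgebra ℤ G) : r * 2 = 2 * r := by
  rw [mul_two, two_mul]

lemma mul_NN (x : MonoidAlgebra ℤ G) : x * NN G = eps G x • NN G := by
  induction x using MonoidAlgebra.induction_linear with
  | zero => simp
  | add f g hf hg => rw [add_mul, hf, hg, map_add, add_smul]
  | single a b =>
      rw [single_eq_smul_of, smul_mul_assoc, of_mul_NN, map_smul, eps_of]
      simp

lemma NN_mul (x : MonoidAlgebra ℤ G) : NN G * x = eps G x • NN G := by
  induction x using MonoidAlgebra.induction_linear with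
  | zero => simp
  | add f g hf hg => rw [mul_add, hf, hg, map_add, add_smul]
  | single a b =>
      rw [single_eq_smul_of, mul_smul_comm, NN_mul_of, map_smul, eps_of]
      simp

lemma two_mul_inj {a b : MonoidAlgebra ℤ G} (h : 2 * a = 2 * b) : a = b := by
  have hz : a - b + (a - b) = 0 := by
    have h' : 2 * (a - b) = 0 := by rw [mul_sub, h, sub_self]
    rwa [two_mul] at h'
  have hab : a - b = 0 := by
    ext g
    have h2 : (a - b).coeff g + (a - b).coeff g = 0 := congrArg (fun f : MonoidAlgebra ℤ G => f.coeff g) hz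
    have h0 : (0 : MonoidAlgebra ℤ G).coeff g = 0 := rfl
    omega
  exact sub_eq_zero.mp hab

lemma sub_eps_smul_mul (r x : MonoidAlgebra ℤ G) :
    r * x - eps G (r * x) • NN G = r * (x - eps G x • NN G) := by
  rw [map_mul, mul_sub, mul_smul_comm, mul_NN r, smul_smul, mul_comm (eps G x) (eps G r)]

/-- The ideal. -/
noncomputable abbrev II (G : Type*) [Group G] [Fintype G] : Submodule (MonoidAlgebra ℤ G) (MonoidAlgebra ℤ G) :=
  Submodule.span (MonoidAlgebra ℤ G) ({2, NN G} : Set (MonoidAlgebra ℤ G))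

lemma key (hodd : Odd (Fintype.card G)) (x : MonoidAlgebra ℤ G) (hx : x ∈ II G) :
    ∃ y, x - eps G x • NN G = 2 * y := by
  induction hx using Submodule.span_induction with
  | mem z hz =>
      rcases hz with h | h
      · refine ⟨1 - NN G, ?_⟩
        subst h
        rw [map_ofNat, zsmul_eq_mul]
        push_cast
        rw [mul_sub, mul_one]
      · obtain ⟨k, hk⟩ := hodd
        refine ⟨(-(k:ℤ)) • NN G, ?_⟩
        simp only [Set.mem_singleton_iff] at h
        subst h
        rw [eps_NN, mul_smul_comm, hk]
        have h2N : (2 : MonoidAlgebra ℤ G) * NN G = (2:ℤ) • NN G := by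
          rw [zsmul_eq_mul]; norm_num
        have h1N : NN G - ((2*k+1 : ℕ) : ℤ) • NN G = ((1 : ℤ) - ((2*k+1 : ℕ) : ℤ)) • NN G := by
          rw [sub_smul, one_smul]
        rw [h2N, smul_smul, h1N]
        congr 1
        push_cast
        ring
  | zero => exact ⟨0, by simp⟩
  | add a b _ _ ha hb =>
      obtain ⟨ya, hya⟩ := ha
      obtain ⟨yb, hyb⟩ := hb
      exact ⟨ya + yb, by rw [map_add, add_smul, mul_add, ← hya, ← hyb]; abel⟩
  | smul r a _ ha =>
      obtain ⟨y, hy⟩ := ha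
      refine ⟨r * y, ?_⟩
      rw [smul_eq_mul, sub_eps_smul_mul, hy, ← mul_assoc, ← mul_assoc, comm_two]

variable (hodd : Odd (Fintype.card G))

noncomputable def hfun (hodd : Odd (Fintype.card G)) (x : ↥(II G)) : MonoidAlgebra ℤ G :=
  (key hodd x.1 x.2).choose

lemma hfun_spec (x : ↥(II G)) : (x : MonoidAlgebra ℤ G) - eps G x • NN G = 2 * hfun hodd x :=
  (key hodd x.1 x.2).choose_spec

/-- The section `i`. -/
noncomputable def imap (hodd : Odd (Fintype.card G)) :
    ↥(II G) →ₗ[MonoidAlgebra ℤ G] (MonoidAlgebra ℤ G) × (MonoidAlgebra ℤ G) where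
  toFun x := (hfun hodd x, x)
  map_add' x y := by
    have h1 : hfun hodd (x + y) = hfun hodd x + hfun hodd y := by
      apply two_mul_inj
      rw [← hfun_spec hodd (x + y), mul_add, ← hfun_spec hodd x, ← hfun_spec hodd y,
        Submodule.coe_add, map_add, add_smul]
      abel
    simp [Prod.ext_iff, h1]
  map_smul' r x := by
    have h1 : hfun hodd (r • x) = r * hfun hodd x := by
      apply two_mul_inj
      rw [← hfun_spec hodd (r • x)]
      have hc : ((r • x : ↥(II G)) : MonoidAlgebra ℤ G) = r * (x : MonoidAlgebra ℤ G) := rfl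
      rw [hc, sub_eps_smul_mul, hfun_spec hodd x, ← mul_assoc, ← mul_assoc, comm_two]
    simp [Prod.ext_iff, h1]

/-- The retraction `s`. -/
noncomputable def smap :
    (MonoidAlgebra ℤ G) × (MonoidAlgebra ℤ G) →ₗ[MonoidAlgebra ℤ G] ↥(II G) where
  toFun p := ⟨p.1 * 2 + p.2 * NN G,
    Submodule.add_mem _
      (Submodule.smul_mem _ p.1 (Submodule.subset_span (Set.mem_insert _ _)))
      (Submodule.smul_mem _ p.2 (Submodule.subset_span (Set.mem_insert_of_mem _ rfl)))⟩
  map_add' p q := by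
    apply Subtype.ext
    simp only [Prod.fst_add, Prod.snd_add, Submodule.coe_add, add_mul]
    abel
  map_smul' r p := by
    apply Subtype.ext
    simp only [Prod.smul_fst, Prod.smul_snd, smul_eq_mul, SetLike.val_smul, mul_add, mul_assoc, RingHom.id_apply]

lemma split : (smap).comp (imap hodd) = LinearMap.id := by
  refine LinearMap.ext fun x => Subtype.ext ?_
  show hfun hodd x * 2 + (x : MonoidAlgebra ℤ G) * NN G = (x : MonoidAlgebra ℤ G)
  rw [mul_NN, comm_two, ← hfun_spec hodd x]
  abel

end SpanTwoNormAux

open SpanTwoNormAux in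
/-- For a finite group `G` of odd order, the left ideal `⟨2, N⟩ ⊆ ℤG` generated by `2` and
the norm element `N = Σ_{g ∈ G} g` is a projective `ℤG`-module. -/
theorem span_two_norm_projective (G : Type*) [Group G] [Fintype G]
    (hodd : Odd (Fintype.card G)) :
    Module.Projective (MonoidAlgebra ℤ G)
      (Submodule.span (MonoidAlgebra ℤ G)
        ({2, ∑ g : G, MonoidAlgebra.of ℤ G g} : Set (MonoidAlgebra ℤ G))) :=
  Module.Projective.of_split (imap hodd) smap (split hodd)
end
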